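/- A group Γ is amenable if and only if the following fixed point property holds: for every real topological vector space E in which the continuous linear functionals separate points (for all x ≠ y in E there is a continuous linear functional f : E → ℝ with f(x) ≠ f(y)), every nonempty compact convex subset K ⊆ E, and every action of Γ on K such that each γ ∈ Γ acts by a continuous affine map (γ.(t·x + (1−t)·y) = t·(γ.x) + (1−t)·(γ.y) for all x, y ∈ K and t ∈ [0,1]), there exists a point k ∈ K with γ.k = k for every γ ∈ Γ. -/

import Mathlib

/-- A group `Γ` is amenable if it admits a finitely additive, left-invariant probability
measure defined on all of its subsets. -/
def Amenable (Γ : Type*) [Group Γ] : Prop :=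
  ∃ m : Set Γ → ℝ,
    (∀ A : Set Γ, 0 ≤ m A) ∧ (∀ A : Set Γ, m A ≤ 1) ∧
    m (Set.univ : Set Γ) = 1 ∧
    (∀ A B : Set Γ, Disjoint A B → m (A ∪ B) = m A + m B) ∧
    (∀ (γ : Γ) (A : Set Γ), m ((γ * ·) '' A) = m A)

universe u

open Filter Set


section SimpleInt
variable {Γ : Type*} [Group Γ] (m : Set Γ → ℝ)

open Classical in
/-- integral of a finite-range function -/
noncomputable def simpleInt (h : Γ → ℝ) : ℝ :=
  if hf : (Set.range h).Finite then ∑ v ∈ hf.toFinset, v * m (h ⁻¹' {v}) else 0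

lemma simpleInt_eq {h : Γ → ℝ} (hf : (Set.range h).Finite) :
    simpleInt m h = ∑ v ∈ hf.toFinset, v * m (h ⁻¹' {v}) := by
  rw [simpleInt, dif_pos hf]

lemma m_empty (hadd : ∀ A B : Set Γ, Disjoint A B → m (A ∪ B) = m A + m B) : m ∅ = 0 := by
  have := hadd ∅ ∅ disjoint_bot_left
  simp at this; linarith

lemma m_biUnion (hadd : ∀ A B : Set Γ, Disjoint A B → m (A ∪ B) = m A + m B)
    {α : Type*} [DecidableEq α] (s : Finset α) (f : α → Set Γ)
    (hdisj : ∀ a ∈ s, ∀ b ∈ s, a ≠ b → Disjoint (f a) (f b)) :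
    m (⋃ a ∈ s, f a) = ∑ a ∈ s, m (f a) := by
  classical
  induction s using Finset.induction_on with
  | empty => simpa using m_empty m hadd
  | @insert a s hx ih =>
    rw [Finset.sum_insert hx, ← ih (fun x hxs y hy hxy =>
      hdisj x (Finset.mem_insert_of_mem hxs) y (Finset.mem_insert_of_mem hy) hxy)]
    have he : (⋃ b ∈ insert a s, f b) = f a ∪ ⋃ b ∈ s, f b := by
      simp [Set.biUnion_insert]
    rw [he, hadd]
    rw [Set.disjoint_iff_inter_eq_empty]
    ext x
    simp only [Set.mem_inter_iff, Set.mem_iUnion, Set.mem_empty_iff_false, iff_false, not_and]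
    rintro hfa ⟨b, hb, hfb⟩
    exact (hdisj a (Finset.mem_insert_self a s) b (Finset.mem_insert_of_mem hb)
      (fun h => hx (h ▸ hb))).le_bot ⟨hfa, hfb⟩
end SimpleInt

set_option linter.unusedSectionVars false

section Master
variable {Γ : Type*} [Group Γ] {m : Set Γ → ℝ}
variable (hadd : ∀ A B : Set Γ, Disjoint A B → m (A ∪ B) = m A + m B)

include hadd in
/-- master pushforward lemma -/
lemma simpleInt_comp {α : Type*} (H : Γ → α) (hH : (Set.range H).Finite) (φ : α → ℝ) :
    simpleInt m (φ ∘ H) = ∑ p ∈ hH.toFinset, φ p * m (H ⁻¹' {p}) := by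
  classical
  have hfin : (Set.range (φ ∘ H)).Finite := by
    rw [Set.range_comp]; exact hH.image φ
  rw [simpleInt_eq m hfin]
  have himg : hfin.toFinset = hH.toFinset.image φ := by
    ext v
    simp [Set.range_comp, Set.Finite.mem_toFinset]
  rw [himg]
  rw [← Finset.sum_fiberwise_of_maps_to (g := φ) (t := hH.toFinset.image φ)
    (fun p hp => Finset.mem_image_of_mem φ hp) (fun p => φ p * m (H ⁻¹' {p}))]
  refine Finset.sum_congr rfl (fun v hv => ?_)
  have hpre : (φ ∘ H) ⁻¹' {v} = ⋃ p ∈ hH.toFinset.filter (fun p => φ p = v), H ⁻¹' {p} := by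
    ext δ
    simp only [Set.mem_preimage, Function.comp_apply, Set.mem_singleton_iff, Set.mem_iUnion,
      Finset.mem_filter, Set.Finite.mem_toFinset, Set.mem_range]
    constructor
    · intro hv; exact ⟨H δ, ⟨⟨δ, rfl⟩, hv⟩, rfl⟩
    · rintro ⟨p, ⟨_, hφ⟩, hp⟩; rw [hp]; exact hφ
  rw [hpre, m_biUnion m hadd]
  · rw [Finset.mul_sum]
    refine Finset.sum_congr rfl (fun p hp => ?_)
    rw [Finset.mem_filter] at hp
    rw [hp.2]
  · intro a _ b _ hab
    rw [Set.disjoint_iff_inter_eq_empty]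
    ext x; simp only [Set.mem_inter_iff, Set.mem_preimage, Set.mem_singleton_iff,
      Set.mem_empty_iff_false, iff_false, not_and]
    intro h1 h2; exact hab (h1 ▸ h2 ▸ rfl)
end Master

section SimpleProps
variable {Γ : Type*} [Group Γ] {m : Set Γ → ℝ}
variable (hpos : ∀ A : Set Γ, 0 ≤ m A)
  (huniv : m Set.univ = 1)
  (hadd : ∀ A B : Set Γ, Disjoint A B → m (A ∪ B) = m A + m B)
  (hinv : ∀ (γ : Γ) (A : Set Γ), m ((γ * ·) '' A) = m A)

include hadd in
lemma simpleInt_add {h₁ h₂ : Γ → ℝ} (hf₁ : (Set.range h₁).Finite)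
    (hf₂ : (Set.range h₂).Finite) :
    simpleInt m (h₁ + h₂) = simpleInt m h₁ + simpleInt m h₂ := by
  classical
  set H : Γ → ℝ × ℝ := fun δ => (h₁ δ, h₂ δ) with hHdef
  have hH : (Set.range H).Finite := by
    apply Set.Finite.subset (hf₁.prod hf₂)
    rintro _ ⟨δ, rfl⟩; exact ⟨⟨δ, rfl⟩, ⟨δ, rfl⟩⟩
  have e1 : h₁ = (fun p : ℝ × ℝ => p.1) ∘ H := rfl
  have e2 : h₂ = (fun p : ℝ × ℝ => p.2) ∘ H := rfl
  have e3 : h₁ + h₂ = (fun p : ℝ × ℝ => p.1 + p.2) ∘ H := rfl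
  rw [e3, simpleInt_comp hadd H hH]
  conv_rhs => rw [e1, e2, simpleInt_comp hadd H hH, simpleInt_comp hadd H hH]
  rw [← Finset.sum_add_distrib]
  exact Finset.sum_congr rfl (fun p _ => by ring)

include hadd in
lemma simpleInt_smul {h : Γ → ℝ} (hf : (Set.range h).Finite) (c : ℝ) :
    simpleInt m (c • h) = c * simpleInt m h := by
  have e : c • h = (fun v => c * v) ∘ h := rfl
  rw [e, simpleInt_comp hadd h hf, simpleInt_eq m hf, Finset.mul_sum]
  exact Finset.sum_congr rfl (fun v _ => by ring)

include huniv hadd in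
lemma simpleInt_partition {h : Γ → ℝ} (hf : (Set.range h).Finite) :
    ∑ v ∈ hf.toFinset, m (h ⁻¹' {v}) = 1 := by
  classical
  rw [← m_biUnion m hadd]
  · rw [← huniv]
    congr 1
    ext δ
    simp only [Set.mem_iUnion, Set.Finite.mem_toFinset, Set.mem_range, Set.mem_preimage,
      Set.mem_singleton_iff, Set.mem_univ, iff_true]
    exact ⟨h δ, ⟨δ, rfl⟩, rfl⟩
  · intro a _ b _ hab
    rw [Set.disjoint_iff_inter_eq_empty]
    ext x; simp only [Set.mem_inter_iff, Set.mem_preimage, Set.mem_singleton_iff,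
      Set.mem_empty_iff_false, iff_false, not_and]
    intro h1 h2; exact hab (h1 ▸ h2 ▸ rfl)

include hpos huniv hadd in
lemma simpleInt_le {h : Γ → ℝ} (hf : (Set.range h).Finite) {c : ℝ} (hc : ∀ δ, h δ ≤ c) :
    simpleInt m h ≤ c := by
  rw [simpleInt_eq m hf]
  calc ∑ v ∈ hf.toFinset, v * m (h ⁻¹' {v})
      ≤ ∑ v ∈ hf.toFinset, c * m (h ⁻¹' {v}) := by
        refine Finset.sum_le_sum (fun v hv => ?_)
        rw [Set.Finite.mem_toFinset] at hv
        obtain ⟨δ, rfl⟩ := hv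
        exact mul_le_mul_of_nonneg_right (hc δ) (hpos _)
    _ = c := by rw [← Finset.mul_sum, simpleInt_partition huniv hadd hf, mul_one]

include hpos huniv hadd in
lemma simpleInt_ge {h : Γ → ℝ} (hf : (Set.range h).Finite) {c : ℝ} (hc : ∀ δ, c ≤ h δ) :
    c ≤ simpleInt m h := by
  rw [simpleInt_eq m hf]
  calc c = ∑ v ∈ hf.toFinset, c * m (h ⁻¹' {v}) := by
        rw [← Finset.mul_sum, simpleInt_partition huniv hadd hf, mul_one]
    _ ≤ ∑ v ∈ hf.toFinset, v * m (h ⁻¹' {v}) := by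
        refine Finset.sum_le_sum (fun v hv => ?_)
        rw [Set.Finite.mem_toFinset] at hv
        obtain ⟨δ, rfl⟩ := hv
        exact mul_le_mul_of_nonneg_right (hc δ) (hpos _)

include hpos huniv hadd in
lemma simpleInt_abs_le {h : Γ → ℝ} (hf : (Set.range h).Finite) {c : ℝ}
    (hc : ∀ δ, |h δ| ≤ c) : |simpleInt m h| ≤ c := by
  rw [abs_le]
  exact ⟨simpleInt_ge hpos huniv hadd hf (fun δ => neg_le_of_abs_le (hc δ)),
    simpleInt_le hpos huniv hadd hf (fun δ => le_of_abs_le (hc δ))⟩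

include hinv in
lemma simpleInt_translate (h : Γ → ℝ) (γ : Γ) :
    simpleInt m (fun δ => h (γ * δ)) = simpleInt m h := by
  classical
  have hrange : Set.range (fun δ => h (γ * δ)) = Set.range h := by
    ext v
    constructor
    · rintro ⟨δ, rfl⟩; exact ⟨γ * δ, rfl⟩
    · rintro ⟨δ, rfl⟩; exact ⟨γ⁻¹ * δ, by simp⟩
  by_cases hf : (Set.range h).Finite
  · have hf' : (Set.range (fun δ => h (γ * δ))).Finite := hrange ▸ hf
    rw [simpleInt_eq m hf', simpleInt_eq m hf]
    have htf : hf'.toFinset = hf.toFinset := by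
      apply Finset.coe_injective; rw [Set.Finite.coe_toFinset, Set.Finite.coe_toFinset, hrange]
    rw [htf]
    refine Finset.sum_congr rfl (fun v _ => ?_)
    congr 1
    rw [← hinv γ⁻¹ (h ⁻¹' {v})]
    congr 1
    ext δ
    simp only [Set.mem_preimage, Set.mem_singleton_iff, Set.mem_image]
    constructor
    · intro hδ; exact ⟨γ * δ, hδ, by group⟩
    · rintro ⟨x, hx, rfl⟩; simpa using hx
  · have hf' : ¬ (Set.range (fun δ => h (γ * δ))).Finite := hrange ▸ hf
    rw [simpleInt, dif_neg hf', simpleInt, dif_neg hf]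
end SimpleProps

section Mhat
variable {Γ : Type*} [Group Γ]

/-- discretization -/
noncomputable def sApprox (h : Γ → ℝ) (n : ℕ) : Γ → ℝ :=
  fun δ => (⌊h δ * (n + 1)⌋ : ℝ) / (n + 1)

/-- boundedness -/
def Bdd (h : Γ → ℝ) : Prop := ∃ c : ℝ, ∀ δ, |h δ| ≤ c

lemma sApprox_le (h : Γ → ℝ) (n : ℕ) (δ : Γ) : sApprox h n δ ≤ h δ := by
  rw [sApprox, div_le_iff₀ (by positivity)]
  exact Int.floor_le _

lemma sApprox_gt (h : Γ → ℝ) (n : ℕ) (δ : Γ) : h δ - 1 / (n + 1) < sApprox h n δ := by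
  rw [sApprox, lt_div_iff₀ (by positivity), sub_mul, div_mul_cancel₀]
  · exact Int.sub_one_lt_floor _
  · positivity

lemma sApprox_abs_sub (h : Γ → ℝ) (n : ℕ) (δ : Γ) :
    |h δ - sApprox h n δ| ≤ 1 / (n + 1) := by
  rw [abs_le]
  constructor
  · have := sApprox_le h n δ; have : (0:ℝ) < 1 / (n+1) := by positivity
    nlinarith [sApprox_le h n δ]
  · nlinarith [sApprox_gt h n δ]

lemma sApprox_finite {h : Γ → ℝ} (hb : Bdd h) (n : ℕ) :
    (Set.range (sApprox h n)).Finite := by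
  obtain ⟨c, hc⟩ := hb
  apply Set.Finite.subset (Set.Finite.image (fun z : ℤ => (z : ℝ) / (n + 1))
    (Set.finite_Icc (⌊-(c+1) * (n+1)⌋ : ℤ) ⌈(c+1) * (n+1)⌉))
  rintro _ ⟨δ, rfl⟩
  refine ⟨⌊h δ * (n+1)⌋, ?_, rfl⟩
  have h1 : |h δ| ≤ c := hc δ
  have hn : (0:ℝ) < (n:ℝ) + 1 := by positivity
  constructor
  · apply Int.floor_le_floor
    nlinarith [abs_le.mp h1]
  · refine le_trans (Int.floor_le_ceil _) (Int.ceil_le_ceil ?_)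
    nlinarith [abs_le.mp h1]
end Mhat


section RangeFin
variable {Γ : Type*}

lemma finite_range_add {h₁ h₂ : Γ → ℝ} (hf₁ : (Set.range h₁).Finite)
    (hf₂ : (Set.range h₂).Finite) : (Set.range (h₁ + h₂)).Finite := by
  apply Set.Finite.subset (Set.Finite.image2 (· + ·) hf₁ hf₂)
  rintro _ ⟨δ, rfl⟩
  exact Set.mem_image2_of_mem ⟨δ, rfl⟩ ⟨δ, rfl⟩

lemma finite_range_smul {h : Γ → ℝ} (hf : (Set.range h).Finite) (c : ℝ) :
    (Set.range (c • h)).Finite := by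
  apply Set.Finite.subset (hf.image (fun v => c * v))
  rintro _ ⟨δ, rfl⟩
  exact ⟨h δ, ⟨δ, rfl⟩, rfl⟩

lemma finite_range_const (c : ℝ) : (Set.range (fun _ : Γ => c)).Finite :=
  Set.finite_range_const
end RangeFin

section SubLemma
variable {Γ : Type*} [Group Γ] {m : Set Γ → ℝ}
variable (hadd : ∀ A B : Set Γ, Disjoint A B → m (A ∪ B) = m A + m B)

include hadd in
lemma simpleInt_sub {h₁ h₂ : Γ → ℝ} (hf₁ : (Set.range h₁).Finite)
    (hf₂ : (Set.range h₂).Finite) :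
    simpleInt m (h₁ - h₂) = simpleInt m h₁ - simpleInt m h₂ := by
  have e : h₁ - h₂ = h₁ + (-1 : ℝ) • h₂ := by
    ext δ; simp only [Pi.add_apply, Pi.sub_apply, Pi.smul_apply, smul_eq_mul]; ring
  rw [e, simpleInt_add hadd hf₁ (finite_range_smul hf₂ (-1)), simpleInt_smul hadd hf₂]
  ring
end SubLemma

section MhatProps
variable {Γ : Type*} [Group Γ] {m : Set Γ → ℝ}

/-- the mean extended to bounded functions -/
noncomputable def mhat (m : Set Γ → ℝ) (h : Γ → ℝ) : ℝ :=
  limUnder atTop (fun n => simpleInt m (sApprox h n))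

variable (hpos : ∀ A : Set Γ, 0 ≤ m A)
  (huniv : m Set.univ = 1)
  (hadd : ∀ A B : Set Γ, Disjoint A B → m (A ∪ B) = m A + m B)
  (hinv : ∀ (γ : Γ) (A : Set Γ), m ((γ * ·) '' A) = m A)

lemma two_inv_succ_tendsto : Tendsto (fun N : ℕ => 2 / ((N : ℝ) + 1)) atTop (nhds 0) := by
  have := tendsto_one_div_add_atTop_nhds_zero_nat.const_mul (2 : ℝ)
  simpa [div_eq_mul_inv, mul_comm, mul_assoc, mul_left_comm] using this

lemma inv_succ_le_of_le {n N : ℕ} (hn : N ≤ n) : 1 / ((n:ℝ)+1) ≤ 1 / ((N:ℝ)+1) := by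
  apply one_div_le_one_div_of_le (by positivity)
  linarith [(Nat.cast_le (α := ℝ)).mpr hn]

include hpos huniv hadd in
lemma mhat_tendsto {h : Γ → ℝ} (hb : Bdd h) :
    Tendsto (fun n => simpleInt m (sApprox h n)) atTop (nhds (mhat m h)) := by
  apply tendsto_nhds_limUnder
  apply cauchySeq_tendsto_of_complete
  refine cauchySeq_of_le_tendsto_0 (fun N : ℕ => 2 / ((N : ℝ) + 1)) ?_ two_inv_succ_tendsto
  intro n k N hn hk
  have hfn := sApprox_finite hb n
  have hfk := sApprox_finite hb k
  rw [Real.dist_eq, ← simpleInt_sub hadd hfn hfk]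
  apply simpleInt_abs_le hpos huniv hadd (by
    have := finite_range_add hfn (finite_range_smul hfk (-1))
    have e : sApprox h n - sApprox h k = sApprox h n + (-1 : ℝ) • sApprox h k := by
      ext δ; simp only [Pi.add_apply, Pi.sub_apply, Pi.smul_apply, smul_eq_mul]; ring
    rw [e]; exact this)
  intro δ
  have h1 := sApprox_abs_sub h n δ
  have h2 := sApprox_abs_sub h k δ
  have e : (sApprox h n - sApprox h k) δ
      = (h δ - sApprox h k δ) - (h δ - sApprox h n δ) := by
    simp only [Pi.sub_apply]; ring
  rw [e]
  calc |(h δ - sApprox h k δ) - (h δ - sApprox h n δ)|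
      ≤ |h δ - sApprox h k δ| + |h δ - sApprox h n δ| := abs_sub _ _
    _ ≤ 1 / ((N:ℝ)+1) + 1 / ((N:ℝ)+1) :=
        add_le_add (le_trans h2 (inv_succ_le_of_le hk)) (le_trans h1 (inv_succ_le_of_le hn))
    _ = 2 / ((N:ℝ)+1) := by ring
end MhatProps

section MhatProps2
variable {Γ : Type*} [Group Γ] {m : Set Γ → ℝ}
variable (hpos : ∀ A : Set Γ, 0 ≤ m A)
  (huniv : m Set.univ = 1)
  (hadd : ∀ A B : Set Γ, Disjoint A B → m (A ∪ B) = m A + m B)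
  (hinv : ∀ (γ : Γ) (A : Set Γ), m ((γ * ·) '' A) = m A)

lemma Bdd.add {h₁ h₂ : Γ → ℝ} (hb₁ : Bdd h₁) (hb₂ : Bdd h₂) : Bdd (h₁ + h₂) := by
  obtain ⟨c₁, hc₁⟩ := hb₁; obtain ⟨c₂, hc₂⟩ := hb₂
  exact ⟨c₁ + c₂, fun δ => le_trans (abs_add_le _ _) (add_le_add (hc₁ δ) (hc₂ δ))⟩

lemma Bdd.smul {h : Γ → ℝ} (hb : Bdd h) (c : ℝ) : Bdd (c • h) := by
  obtain ⟨c₁, hc₁⟩ := hb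
  refine ⟨|c| * c₁, fun δ => ?_⟩
  simp only [Pi.smul_apply, smul_eq_mul, abs_mul]
  exact mul_le_mul_of_nonneg_left (hc₁ δ) (abs_nonneg c)

lemma Bdd.const (c : ℝ) : Bdd (fun _ : Γ => c) := ⟨|c|, fun _ => le_refl _⟩

include hpos huniv hadd in
lemma mhat_le {h : Γ → ℝ} (hb : Bdd h) {c : ℝ} (hc : ∀ δ, h δ ≤ c) : mhat m h ≤ c := by
  refine le_of_tendsto' (mhat_tendsto hpos huniv hadd hb) (fun n => ?_)
  exact simpleInt_le hpos huniv hadd (sApprox_finite hb n)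
    (fun δ => le_trans (sApprox_le h n δ) (hc δ))

include hpos huniv hadd in
lemma mhat_ge {h : Γ → ℝ} (hb : Bdd h) {c : ℝ} (hc : ∀ δ, c ≤ h δ) : c ≤ mhat m h := by
  have key : ∀ n : ℕ, c - 1 / ((n:ℝ)+1) ≤ simpleInt m (sApprox h n) := fun n =>
    simpleInt_ge hpos huniv hadd (sApprox_finite hb n)
      (fun δ => le_of_lt (lt_of_le_of_lt (by linarith [hc δ]) (sApprox_gt h n δ)))
  have ht : Tendsto (fun n : ℕ => c - 1 / ((n:ℝ)+1)) atTop (nhds c) := by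
    simpa using tendsto_const_nhds.sub (tendsto_one_div_add_atTop_nhds_zero_nat : Tendsto (fun n : ℕ => 1 / ((n : ℝ) + 1)) atTop (nhds 0))
  exact le_of_tendsto_of_tendsto' ht (mhat_tendsto hpos huniv hadd hb) key

include hpos huniv hadd in
lemma mhat_const (c : ℝ) : mhat m (fun _ : Γ => c) = c :=
  le_antisymm (mhat_le hpos huniv hadd (Bdd.const c) (fun _ => le_refl c))
    (mhat_ge hpos huniv hadd (Bdd.const c) (fun _ => le_refl c))

include hpos huniv hadd in
lemma mhat_add {h₁ h₂ : Γ → ℝ} (hb₁ : Bdd h₁) (hb₂ : Bdd h₂) :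
    mhat m (h₁ + h₂) = mhat m h₁ + mhat m h₂ := by
  have t1 := mhat_tendsto hpos huniv hadd hb₁
  have t2 := mhat_tendsto hpos huniv hadd hb₂
  have t3 := mhat_tendsto hpos huniv hadd (hb₁.add hb₂)
  -- difference tends to 0
  have hdiff : Tendsto (fun n => simpleInt m (sApprox (h₁ + h₂) n)
      - (simpleInt m (sApprox h₁ n) + simpleInt m (sApprox h₂ n))) atTop (nhds 0) := by
    have hb3 : ∀ n : ℕ, |simpleInt m (sApprox (h₁+h₂) n)
        - (simpleInt m (sApprox h₁ n) + simpleInt m (sApprox h₂ n))| ≤ 3 / ((n:ℝ)+1) := by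
      intro n
      have hf1 := sApprox_finite hb₁ n
      have hf2 := sApprox_finite hb₂ n
      have hf3 := sApprox_finite (hb₁.add hb₂) n
      have e : simpleInt m (sApprox (h₁+h₂) n)
          - (simpleInt m (sApprox h₁ n) + simpleInt m (sApprox h₂ n))
          = simpleInt m (sApprox (h₁+h₂) n - (sApprox h₁ n + sApprox h₂ n)) := by
        rw [simpleInt_sub hadd hf3 (finite_range_add hf1 hf2),
          simpleInt_add hadd hf1 hf2]
      rw [e]
      apply simpleInt_abs_le hpos huniv hadd
      · have e2 : sApprox (h₁+h₂) n - (sApprox h₁ n + sApprox h₂ n)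
            = sApprox (h₁+h₂) n + (-1:ℝ) • (sApprox h₁ n + sApprox h₂ n) := by
          ext δ; simp only [Pi.add_apply, Pi.sub_apply, Pi.smul_apply, smul_eq_mul]; ring
        rw [e2]
        exact finite_range_add hf3 (finite_range_smul (finite_range_add hf1 hf2) (-1))
      · intro δ
        have a1 := sApprox_abs_sub h₁ n δ
        have a2 := sApprox_abs_sub h₂ n δ
        have a3 := sApprox_abs_sub (h₁+h₂) n δ
        have e3 : (sApprox (h₁+h₂) n - (sApprox h₁ n + sApprox h₂ n)) δ
            = (h₁ δ - sApprox h₁ n δ) + (h₂ δ - sApprox h₂ n δ)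
              - ((h₁+h₂) δ - sApprox (h₁+h₂) n δ) := by
          simp only [Pi.add_apply, Pi.sub_apply]; ring
        rw [e3, abs_le]
        rw [abs_le] at a1 a2 a3
        have h3 : 3/((n:ℝ)+1) = 1/((n:ℝ)+1) + 1/((n:ℝ)+1) + 1/((n:ℝ)+1) := by ring
        exact ⟨by linarith [a1.1, a2.1, a3.2], by linarith [a1.2, a2.2, a3.1]⟩
    have h0 : Tendsto (fun n : ℕ => 3 / ((n:ℝ)+1)) atTop (nhds 0) := by
      have := tendsto_one_div_add_atTop_nhds_zero_nat.const_mul (3 : ℝ)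
      simpa [div_eq_mul_inv, mul_comm, mul_assoc, mul_left_comm] using this
    apply squeeze_zero_norm hb3 h0
  have := t3.sub (t1.add t2)
  have h2 := hdiff
  have : mhat m (h₁ + h₂) - (mhat m h₁ + mhat m h₂) = 0 :=
    tendsto_nhds_unique this h2
  linarith

include hpos huniv hadd in
lemma mhat_smul {h : Γ → ℝ} (hb : Bdd h) (c : ℝ) :
    mhat m (c • h) = c * mhat m h := by
  have t1 := mhat_tendsto hpos huniv hadd hb
  have t3 := mhat_tendsto hpos huniv hadd (hb.smul c)
  have hdiff : Tendsto (fun n => simpleInt m (sApprox (c • h) n)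
      - c * simpleInt m (sApprox h n)) atTop (nhds 0) := by
    have hb3 : ∀ n : ℕ, |simpleInt m (sApprox (c • h) n)
        - c * simpleInt m (sApprox h n)| ≤ (1 + |c|) / ((n:ℝ)+1) := by
      intro n
      have hf1 := sApprox_finite hb n
      have hf3 := sApprox_finite (hb.smul c) n
      have e : simpleInt m (sApprox (c • h) n) - c * simpleInt m (sApprox h n)
          = simpleInt m (sApprox (c • h) n - c • sApprox h n) := by
        rw [simpleInt_sub hadd hf3 (finite_range_smul hf1 c),
          simpleInt_smul hadd hf1]
      rw [e]
      apply simpleInt_abs_le hpos huniv hadd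
      · have e2 : sApprox (c • h) n - c • sApprox h n
            = sApprox (c • h) n + (-c) • sApprox h n := by
          ext δ; simp only [Pi.add_apply, Pi.sub_apply, Pi.smul_apply, smul_eq_mul]; ring
        rw [e2]
        exact finite_range_add hf3 (finite_range_smul hf1 (-c))
      · intro δ
        have a1 := sApprox_abs_sub h n δ
        have a3 := sApprox_abs_sub (c • h) n δ
        have e3 : (sApprox (c • h) n - c • sApprox h n) δ
            = c * (h δ - sApprox h n δ) - ((c • h) δ - sApprox (c • h) n δ) := by
          simp only [Pi.sub_apply, Pi.smul_apply, smul_eq_mul]; ring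
        rw [e3]
        calc |c * (h δ - sApprox h n δ) - ((c • h) δ - sApprox (c • h) n δ)|
            ≤ |c * (h δ - sApprox h n δ)| + |(c • h) δ - sApprox (c • h) n δ| := abs_sub _ _
          _ ≤ |c| * (1/((n:ℝ)+1)) + 1/((n:ℝ)+1) := by
              rw [abs_mul]
              exact add_le_add (mul_le_mul_of_nonneg_left a1 (abs_nonneg c)) a3
          _ = (1 + |c|) / ((n:ℝ)+1) := by ring
    have h0 : Tendsto (fun n : ℕ => (1 + |c|) / ((n:ℝ)+1)) atTop (nhds 0) := by
      have := tendsto_one_div_add_atTop_nhds_zero_nat.const_mul (1 + |c|)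
      simpa [div_eq_mul_inv, mul_comm, mul_assoc, mul_left_comm] using this
    apply squeeze_zero_norm hb3 h0
  have := t3.sub (t1.const_mul c)
  have : mhat m (c • h) - c * mhat m h = 0 := tendsto_nhds_unique this hdiff
  linarith

include hinv in
lemma mhat_translate (h : Γ → ℝ) (γ : Γ) :
    mhat m (fun δ => h (γ * δ)) = mhat m h := by
  unfold mhat
  congr 1
  funext n
  have e : sApprox (fun δ => h (γ * δ)) n = fun δ => sApprox h n (γ * δ) := rfl
  rw [e]
  exact simpleInt_translate hinv (sApprox h n) γ
end MhatProps2

section MhatSum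
variable {Γ : Type*} [Group Γ] {m : Set Γ → ℝ}
variable (hpos : ∀ A : Set Γ, 0 ≤ m A)
  (huniv : m Set.univ = 1)
  (hadd : ∀ A B : Set Γ, Disjoint A B → m (A ∪ B) = m A + m B)

lemma Bdd.finset_sum {ι : Type*} (t : Finset ι) (h : ι → Γ → ℝ)
    (hb : ∀ i ∈ t, Bdd (h i)) : Bdd (fun δ => ∑ i ∈ t, h i δ) := by
  classical
  induction t using Finset.induction_on with
  | empty => simpa using Bdd.const (0 : ℝ)
  | @insert a s ha ih =>
    have e : (fun δ => ∑ i ∈ insert a s, h i δ) = h a + fun δ => ∑ i ∈ s, h i δ := by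
      funext δ; rw [Finset.sum_insert ha]; rfl
    rw [e]
    exact (hb a (Finset.mem_insert_self a s)).add
      (ih (fun i hi => hb i (Finset.mem_insert_of_mem hi)))

include hpos huniv hadd in
lemma mhat_finset_sum {ι : Type*} (t : Finset ι) (h : ι → Γ → ℝ)
    (hb : ∀ i ∈ t, Bdd (h i)) :
    mhat m (fun δ => ∑ i ∈ t, h i δ) = ∑ i ∈ t, mhat m (h i) := by
  classical
  induction t using Finset.induction_on with
  | empty => simpa using mhat_const hpos huniv hadd (0 : ℝ)
  | @insert a s ha ih =>
    have e : (fun δ => ∑ i ∈ insert a s, h i δ) = h a + fun δ => ∑ i ∈ s, h i δ := by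
      funext δ; rw [Finset.sum_insert ha]; rfl
    rw [e, Finset.sum_insert ha,
      mhat_add hpos huniv hadd (hb a (Finset.mem_insert_self a s))
        (Bdd.finset_sum s h (fun i hi => hb i (Finset.mem_insert_of_mem hi))),
      ih (fun i hi => hb i (Finset.mem_insert_of_mem hi))]
end MhatSum

section Forward
variable {Γ : Type u} [Group Γ]

theorem amenable_forward
    (m : Set Γ → ℝ)
    (hpos : ∀ A : Set Γ, 0 ≤ m A)
    (huniv : m Set.univ = 1)
    (hadd : ∀ A B : Set Γ, Disjoint A B → m (A ∪ B) = m A + m B)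
    (hinv : ∀ (γ : Γ) (A : Set Γ), m ((γ * ·) '' A) = m A)
    (E : Type u) [AddCommGroup E] [Module ℝ E] [TopologicalSpace E]
    [IsTopologicalAddGroup E] [ContinuousSMul ℝ E]
    (sep : ∀ x y : E, x ≠ y → ∃ f : E →L[ℝ] ℝ, f x ≠ f y)
    (K : Set E) (hKne : K.Nonempty) (hKcomp : IsCompact K) (hKconv : Convex ℝ K)
    (act : Γ → E → E)
    (hmaps : ∀ (γ : Γ), ∀ x ∈ K, act γ x ∈ K)
    (hone : ∀ x ∈ K, act 1 x = x)
    (hmul : ∀ γ δ : Γ, ∀ x ∈ K, act (γ * δ) x = act γ (act δ x))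
    (hcont : ∀ γ : Γ, ContinuousOn (act γ) K)
    (haff : ∀ γ : Γ, ∀ x ∈ K, ∀ y ∈ K, ∀ t : ℝ, t ∈ Set.Icc (0 : ℝ) 1 →
      act γ (t • x + (1 - t) • y) = t • act γ x + (1 - t) • act γ y) :
    ∃ k ∈ K, ∀ γ : Γ, act γ k = k := by
  classical
  haveI : T2Space E := by
    refine ⟨fun x y hxy => ?_⟩
    obtain ⟨f, hf⟩ := sep x y hxy
    exact separated_by_continuous f.continuous hf
  obtain ⟨x₀, hx₀⟩ := hKne
  set orb : Γ → E := fun δ => act δ x₀ with horbdef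
  have horb : ∀ δ, orb δ ∈ K := fun δ => hmaps δ x₀ hx₀
  -- the index type of continuous affine functions on K
  let ι : Type u := {g : E → ℝ // ContinuousOn g K ∧ ∀ x ∈ K, ∀ y ∈ K, ∀ t : ℝ,
    t ∈ Set.Icc (0:ℝ) 1 → g (t • x + (1-t) • y) = t * g x + (1-t) * g y}
  have hbdd : ∀ g : ι, Bdd (fun δ => g.1 (orb δ)) := by
    intro g
    obtain ⟨c, hc⟩ := ((hKcomp.image_of_continuousOn g.2.1).isBounded).exists_norm_le
    exact ⟨c, fun δ => hc _ (Set.mem_image_of_mem g.1 (horb δ))⟩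
  let C : ι → Set E := fun g => K ∩ g.1 ⁻¹' {mhat m (fun δ => g.1 (orb δ))}
  have hCclosed : ∀ g : ι, IsClosed (C g) := fun g =>
    g.2.1.preimage_isClosed_of_isClosed hKcomp.isClosed isClosed_singleton
  -- finite intersection property
  have hfin : ∀ us : Finset ι, (K ∩ ⋂ g ∈ us, C g).Nonempty := by
    intro us
    let F : E → (↥us → ℝ) := fun x g => (g : ι).1 x
    have hFcont : ContinuousOn F K := continuousOn_pi.mpr (fun g => (g : ι).2.1)
    let S : Set (↥us → ℝ) := F '' K
    have hS1 : IsCompact S := hKcomp.image_of_continuousOn hFcont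
    have hS2 : Convex ℝ S := by
      rintro _ ⟨x, hx, rfl⟩ _ ⟨y, hy, rfl⟩ a b ha hb hab
      have hb1 : b = 1 - a := by linarith
      subst hb1
      refine ⟨a • x + (1 - a) • y, hKconv hx hy ha hb hab, ?_⟩
      funext g
      have haf := (g : ι).2.2 x hx y hy a ⟨ha, by linarith⟩
      simp only [F, Pi.add_apply, Pi.smul_apply, smul_eq_mul]
      rw [haf]
    let p : ↥us → ℝ := fun g => mhat m (fun δ => (g : ι).1 (orb δ))
    have hpS : p ∈ S := by
      by_contra hp
      obtain ⟨f, c, hfS, hfp⟩ := geometric_hahn_banach_closed_point hS2 hS1.isClosed hp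
      set w : ↥us → ℝ := fun g => f (Pi.single g 1) with hwdef
      have hrep : ∀ v : ↥us → ℝ, f v = ∑ g : ↥us, v g * w g := by
        intro v
        conv_lhs => rw [← Finset.univ_sum_single v, map_sum]
        refine Finset.sum_congr rfl (fun g _ => ?_)
        have e : Pi.single g (v g) = v g • (Pi.single g (1:ℝ) : ↥us → ℝ) := by
          rw [← Pi.single_smul, smul_eq_mul, mul_one]
        rw [e, f.map_smul, smul_eq_mul]
      have key : f p = mhat m (fun δ => f (F (orb δ))) := by
        rw [hrep p]
        have e2 : (fun δ => f (F (orb δ)))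
            = fun δ => ∑ g : ↥us, (w g • fun δ' => (g : ι).1 (orb δ')) δ := by
          funext δ
          rw [hrep (F (orb δ))]
          refine Finset.sum_congr rfl (fun g _ => ?_)
          simp only [Pi.smul_apply, smul_eq_mul, F]
          ring
        rw [e2, mhat_finset_sum hpos huniv hadd (Finset.univ : Finset ↥us)
          (fun g => (w g • fun δ' => (g : ι).1 (orb δ')))
          (fun g _ => ((hbdd (g : ι)).smul (w g)))]
        refine Finset.sum_congr rfl (fun g _ => ?_)
        rw [mhat_smul hpos huniv hadd (hbdd (g : ι)) (w g)]
        simp only [p]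
        ring
      have hle : mhat m (fun δ => f (F (orb δ))) ≤ c := by
        have e2 : (fun δ => f (F (orb δ)))
            = fun δ => ∑ g : ↥us, (w g • fun δ' => (g : ι).1 (orb δ')) δ := by
          funext δ
          rw [hrep (F (orb δ))]
          refine Finset.sum_congr rfl (fun g _ => ?_)
          simp only [Pi.smul_apply, smul_eq_mul, F]
          ring
        refine mhat_le hpos huniv hadd ?_ (fun δ => le_of_lt (hfS _ ⟨orb δ, horb δ, rfl⟩))
        rw [e2]
        exact Bdd.finset_sum (Finset.univ : Finset ↥us)
          (fun g => (w g • fun δ' => (g : ι).1 (orb δ')))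
          (fun g _ => ((hbdd (g : ι)).smul (w g)))
      rw [key] at hfp
      exact absurd hfp (not_lt.mpr hle)
    obtain ⟨x, hxK, hFx⟩ := hpS
    refine ⟨x, hxK, ?_⟩
    rw [Set.mem_iInter₂]
    intro g hg
    refine ⟨hxK, ?_⟩
    have := congrFun hFx ⟨g, hg⟩
    simpa [F, p] using this
  -- full intersection nonempty
  have hglob : (K ∩ ⋂ g : ι, C g).Nonempty := by
    by_contra hempty
    rw [Set.not_nonempty_iff_eq_empty] at hempty
    obtain ⟨us, hus⟩ := hKcomp.elim_finite_subfamily_closed C hCclosed hempty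
    obtain ⟨x, hx⟩ := hfin us
    rw [hus] at hx
    exact hx
  obtain ⟨k, hkK, hk⟩ := hglob
  rw [Set.mem_iInter] at hk
  refine ⟨k, hkK, fun γ => ?_⟩
  by_contra hne
  obtain ⟨f, hf⟩ := sep (act γ k) k hne
  -- g₁ : the functional f itself
  have hg₁aff : ∀ x ∈ K, ∀ y ∈ K, ∀ t : ℝ, t ∈ Set.Icc (0:ℝ) 1 →
      f (t • x + (1-t) • y) = t * f x + (1-t) * f y := by
    intro x _ y _ t _
    rw [map_add, f.map_smul, f.map_smul]; simp
  have hg₂cont : ContinuousOn (fun x => f (act γ x)) K :=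
    f.continuous.comp_continuousOn (hcont γ)
  have hg₂aff : ∀ x ∈ K, ∀ y ∈ K, ∀ t : ℝ, t ∈ Set.Icc (0:ℝ) 1 →
      f (act γ (t • x + (1-t) • y)) = t * f (act γ x) + (1-t) * f (act γ y) := by
    intro x hx y hy t ht
    rw [haff γ x hx y hy t ht, map_add, f.map_smul, f.map_smul]; simp
  let g₁ : ι := ⟨fun x => f x, f.continuous.continuousOn, hg₁aff⟩
  let g₂ : ι := ⟨fun x => f (act γ x), hg₂cont, hg₂aff⟩
  have h₁ := (hk g₁).2
  have h₂ := (hk g₂).2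
  simp only [Set.mem_preimage, Set.mem_singleton_iff] at h₁ h₂
  have e : (fun δ => g₂.1 (orb δ)) = fun δ => g₁.1 (orb (γ * δ)) := by
    funext δ
    simp only [g₁, g₂, horbdef]
    rw [← hmul γ δ x₀ hx₀]
  rw [e, mhat_translate hinv (fun δ => g₁.1 (orb δ)) γ] at h₂
  exact hf (h₂.trans h₁.symm)
end Forward


section Backward
variable {Γ : Type u} [Group Γ]

lemma mulLeft_surj (γ : Γ) : Function.Surjective (fun x : Γ => γ * x) :=
  fun b => ⟨γ⁻¹ * b, by dsimp only; rw [mul_inv_cancel_left]⟩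

lemma mulLeft_inj (γ : Γ) : Function.Injective (fun x : Γ => γ * x) :=
  fun a b hab => by simpa using mul_left_cancel hab

theorem amenable_backward
    (H : ∀ (E : Type u) [AddCommGroup E] [Module ℝ E] [TopologicalSpace E]
        [IsTopologicalAddGroup E] [ContinuousSMul ℝ E],
        (∀ x y : E, x ≠ y → ∃ f : E →L[ℝ] ℝ, f x ≠ f y) →
        ∀ K : Set E, K.Nonempty → IsCompact K → Convex ℝ K →
          ∀ act : Γ → E → E,
            (∀ (γ : Γ), ∀ x ∈ K, act γ x ∈ K) →
            (∀ x ∈ K, act 1 x = x) →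
            (∀ γ δ : Γ, ∀ x ∈ K, act (γ * δ) x = act γ (act δ x)) →
            (∀ γ : Γ, ContinuousOn (act γ) K) →
            (∀ γ : Γ, ∀ x ∈ K, ∀ y ∈ K, ∀ t : ℝ, t ∈ Set.Icc (0 : ℝ) 1 →
              act γ (t • x + (1 - t) • y) = t • act γ x + (1 - t) • act γ y) →
            ∃ k ∈ K, ∀ γ : Γ, act γ k = k) :
    ∃ m : Set Γ → ℝ,
      (∀ A : Set Γ, 0 ≤ m A) ∧ (∀ A : Set Γ, m A ≤ 1) ∧
      m (Set.univ : Set Γ) = 1 ∧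
      (∀ A B : Set Γ, Disjoint A B → m (A ∪ B) = m A + m B) ∧
      (∀ (γ : Γ) (A : Set Γ), m ((γ * ·) '' A) = m A) := by
  classical
  let K : Set (Set Γ → ℝ) := {μ | (∀ A, 0 ≤ μ A) ∧ (∀ A, μ A ≤ 1) ∧ μ Set.univ = 1 ∧
    ∀ A B, Disjoint A B → μ (A ∪ B) = μ A + μ B}
  -- separation
  have sep : ∀ x y : Set Γ → ℝ, x ≠ y → ∃ f : (Set Γ → ℝ) →L[ℝ] ℝ, f x ≠ f y := by
    intro x y hxy
    have hex : ∃ A, x A ≠ y A := by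
      by_contra hc
      push_neg at hc
      exact hxy (funext hc)
    obtain ⟨A, hA⟩ := hex
    exact ⟨ContinuousLinearMap.proj A, hA⟩
  -- K nonempty
  have hKne : K.Nonempty := by
    refine ⟨fun A => if (1:Γ) ∈ A then 1 else 0, ?_, ?_, ?_, ?_⟩
    · intro A; dsimp only; split <;> norm_num
    · intro A; dsimp only; split <;> norm_num
    · simp
    · intro A B hAB
      dsimp only
      by_cases hA : (1:Γ) ∈ A
      · have hB : (1:Γ) ∉ B := fun hB => hAB.le_bot ⟨hA, hB⟩
        rw [if_pos (Set.mem_union_left B hA), if_pos hA, if_neg hB]; ring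
      · by_cases hB : (1:Γ) ∈ B
        · rw [if_pos (Set.mem_union_right A hB), if_neg hA, if_pos hB]; ring
        · rw [if_neg (fun h => h.elim hA hB), if_neg hA, if_neg hB]; ring
  -- K closed
  have hKclosed : IsClosed K := by
    have e : K = (⋂ A : Set Γ, {μ : Set Γ → ℝ | 0 ≤ μ A})
        ∩ ((⋂ A : Set Γ, {μ : Set Γ → ℝ | μ A ≤ 1})
        ∩ ({μ : Set Γ → ℝ | μ Set.univ = 1}
        ∩ ⋂ (A : Set Γ) (B : Set Γ) (_ : Disjoint A B),
            {μ : Set Γ → ℝ | μ (A ∪ B) = μ A + μ B})) := by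
      ext μ
      simp only [K, Set.mem_setOf_eq, Set.mem_inter_iff, Set.mem_iInter]
    rw [e]
    refine IsClosed.inter
      (isClosed_iInter (fun A => isClosed_le continuous_const (continuous_apply A)))
      (IsClosed.inter (isClosed_iInter (fun A => isClosed_le (continuous_apply A) continuous_const))
        (IsClosed.inter (isClosed_eq (continuous_apply _) continuous_const) ?_))
    refine isClosed_iInter (fun A => isClosed_iInter (fun B => isClosed_iInter (fun _ => ?_)))
    exact isClosed_eq (continuous_apply _) ((continuous_apply A).add (continuous_apply B))
  -- K compact
  have hKcomp : IsCompact K := by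
    refine IsCompact.of_isClosed_subset (isCompact_univ_pi
      (fun _ : Set Γ => isCompact_Icc (a := (0:ℝ)) (b := 1))) hKclosed ?_
    intro μ hμ
    rw [Set.mem_univ_pi]
    exact fun A => ⟨hμ.1 A, hμ.2.1 A⟩
  -- K convex
  have hKconv : Convex ℝ K := by
    rintro μ hμ ν hν a b ha hb hab
    have key : ∀ A : Set Γ, (a • μ + b • ν) A = a * μ A + b * ν A := fun A => rfl
    refine ⟨?_, ?_, ?_, ?_⟩
    · intro A
      rw [key]
      exact add_nonneg (mul_nonneg ha (hμ.1 A)) (mul_nonneg hb (hν.1 A))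
    · intro A
      rw [key]
      calc a * μ A + b * ν A ≤ a * 1 + b * 1 :=
            add_le_add (mul_le_mul_of_nonneg_left (hμ.2.1 A) ha)
              (mul_le_mul_of_nonneg_left (hν.2.1 A) hb)
        _ = 1 := by rw [mul_one, mul_one, hab]
    · rw [key, hμ.2.2.1, hν.2.2.1, mul_one, mul_one, hab]
    · intro A B hAB
      rw [key, key, key, hμ.2.2.2 A B hAB, hν.2.2.2 A B hAB]
      ring
  -- the action
  let act : Γ → (Set Γ → ℝ) → (Set Γ → ℝ) := fun γ μ => fun A => μ ((fun x => γ⁻¹ * x) '' A)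
  have hmaps : ∀ (γ : Γ), ∀ μ ∈ K, act γ μ ∈ K := by
    intro γ μ hμ
    refine ⟨fun A => hμ.1 _, fun A => hμ.2.1 _, ?_, ?_⟩
    · show μ ((fun x => γ⁻¹ * x) '' Set.univ) = 1
      rw [Set.image_univ, (mulLeft_surj γ⁻¹).range_eq]
      exact hμ.2.2.1
    · intro A B hAB
      show μ ((fun x => γ⁻¹ * x) '' (A ∪ B)) = _
      rw [Set.image_union]
      exact hμ.2.2.2 _ _ (Set.disjoint_image_of_injective (mulLeft_inj γ⁻¹) hAB)
  have hone : ∀ μ ∈ K, act 1 μ = μ := by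
    intro μ _
    funext A
    show μ ((fun x => (1:Γ)⁻¹ * x) '' A) = μ A
    congr 1
    simp [Set.image_id']
  have hmul : ∀ γ δ : Γ, ∀ μ ∈ K, act (γ * δ) μ = act γ (act δ μ) := by
    intro γ δ μ _
    funext A
    show μ ((fun x => (γ * δ)⁻¹ * x) '' A) = μ ((fun x => δ⁻¹ * x) '' ((fun x => γ⁻¹ * x) '' A))
    have he : (fun x : Γ => (γ * δ)⁻¹ * x) = fun x => δ⁻¹ * (γ⁻¹ * x) := by
      funext x; rw [mul_inv_rev, mul_assoc]
    rw [Set.image_image, he]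
  have hcont : ∀ γ : Γ, ContinuousOn (act γ) K := by
    intro γ
    exact (continuous_pi (fun A => continuous_apply _)).continuousOn
  have haff : ∀ γ : Γ, ∀ μ ∈ K, ∀ ν ∈ K, ∀ t : ℝ, t ∈ Set.Icc (0:ℝ) 1 →
      act γ (t • μ + (1 - t) • ν) = t • act γ μ + (1 - t) • act γ ν := by
    intro γ μ _ ν _ t _
    funext A
    rfl
  obtain ⟨k, hkK, hk⟩ := H (Set Γ → ℝ) sep K hKne hKcomp hKconv act hmaps hone hmul hcont haff
  refine ⟨k, hkK.1, hkK.2.1, hkK.2.2.1, hkK.2.2.2, ?_⟩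
  intro γ A
  have := congrFun (hk γ⁻¹) A
  show k ((fun x => γ * x) '' A) = k A
  calc k ((fun x => γ * x) '' A) = act γ⁻¹ k A := by
        show _ = k ((fun x => γ⁻¹⁻¹ * x) '' A)
        rw [inv_inv]
    _ = k A := this
end Backward


/-- A group is amenable if and only if every action of it by continuous affine maps on a
nonempty compact convex subset of a real topological vector space whose continuous linear
functionals separate points admits a global fixed point. -/
theorem amenable_iff_fixed_point_property (Γ : Type u) [Group Γ] :
    Amenable Γ ↔
      ∀ (E : Type u) [AddCommGroup E] [Module ℝ E] [TopologicalSpace E]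
        [IsTopologicalAddGroup E] [ContinuousSMul ℝ E],
        (∀ x y : E, x ≠ y → ∃ f : E →L[ℝ] ℝ, f x ≠ f y) →
        ∀ K : Set E, K.Nonempty → IsCompact K → Convex ℝ K →
          ∀ act : Γ → E → E,
            (∀ (γ : Γ), ∀ x ∈ K, act γ x ∈ K) →
            (∀ x ∈ K, act 1 x = x) →
            (∀ γ δ : Γ, ∀ x ∈ K, act (γ * δ) x = act γ (act δ x)) →
            (∀ γ : Γ, ContinuousOn (act γ) K) →
            (∀ γ : Γ, ∀ x ∈ K, ∀ y ∈ K, ∀ t : ℝ, t ∈ Set.Icc (0 : ℝ) 1 →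
              act γ (t • x + (1 - t) • y) = t • act γ x + (1 - t) • act γ y) →
            ∃ k ∈ K, ∀ γ : Γ, act γ k = k := by
  constructor
  · rintro ⟨m, hpos, hle1, huniv, hadd, hinv⟩
    intro E _ _ _ _ _ sep K hKne hKcomp hKconv act hmaps hone hmul hcont haff
    exact amenable_forward m hpos huniv hadd hinv E sep K hKne hKcomp hKconv act
      hmaps hone hmul hcont haff
  · intro H
    exact amenable_backward H
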